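/- For every integer k ≥ 2, every closed directed walk of length k·(k+1) in the digraph H1(k) either never visits the vertex k+1 or never uses the arc k→1. -/

import Mathlib

/-- Arc relation of the digraph `H1(k)` on vertices `{1, …, k+1} ⊆ ℕ`: the directed
cycle `1 → 2 → … → k → 1` together with the arcs `k → k+1` and `k+1 → 1`. -/
def H1Arc (k : ℕ) : ℕ → ℕ → Prop := fun a b =>
  (1 ≤ a ∧ a < k ∧ b = a + 1) ∨ (a = k ∧ b = 1) ∨ (a = k ∧ b = k + 1) ∨ (a = k + 1 ∧ b = 1)

/-- For `k ≥ 2`, every closed directed walk of length `k·(k+1)` in `H1(k)`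
either never visits the vertex `k+1` or never uses the arc `k → 1`. -/
theorem stmt_13 (k : ℕ) (hk : 2 ≤ k) (u : ℕ → ℕ)
    (hwalk : ∀ i < k * (k + 1), H1Arc k (u i) (u (i + 1)))
    (hclosed : u 0 = u (k * (k + 1))) :
    (∀ i ≤ k * (k + 1), u i ≠ k + 1) ∨
    (∀ i < k * (k + 1), ¬ (u i = k ∧ u (i + 1) = 1)) := by
  set m := k * (k + 1) with hm
  have hmpos : 0 < m := by positivity
  classical
  set S := Finset.range m with hS
  set A := S.filter (fun i => u i = k ∧ u (i + 1) = 1) with hA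
  set B := S.filter (fun i => u i = k + 1) with hB
  -- step identity
  have hstep : ∀ i ∈ S, (u (i + 1) : ℤ) - u i =
      1 - (if u i = k ∧ u (i + 1) = 1 then (k : ℤ) else 0)
        - (if u i = k + 1 then (k : ℤ) + 1 else 0) := by
    intro i hi
    rw [hS, Finset.mem_range] at hi
    rcases hwalk i hi with ⟨h1, h2, h3⟩ | ⟨h1, h2⟩ | ⟨h1, h2⟩ | ⟨h1, h2⟩
    · have hne1 : ¬ (u i = k ∧ u (i + 1) = 1) := by
        rintro ⟨hk1, -⟩; omega
      have hne2 : u i ≠ k + 1 := by omega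
      rw [if_neg hne1, if_neg hne2]
      push_cast [h3]; ring
    · have hne2 : u i ≠ k + 1 := by omega
      rw [if_pos ⟨h1, h2⟩, if_neg hne2, h1, h2]
      push_cast; ring
    · have hne1 : ¬ (u i = k ∧ u (i + 1) = 1) := by
        rintro ⟨-, hk1⟩; omega
      have hne2 : u i ≠ k + 1 := by omega
      rw [if_neg hne1, if_neg hne2, h1, h2]
      push_cast; ring
    · have hne1 : ¬ (u i = k ∧ u (i + 1) = 1) := by
        rintro ⟨hk1, -⟩; omega
      rw [if_neg hne1, if_pos h1, h1, h2]
      push_cast; ring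
  have htel : ∑ i ∈ S, ((u (i + 1) : ℤ) - u i) = 0 := by
    rw [hS, Finset.sum_range_sub (fun i => (u i : ℤ))]
    rw [hclosed]; ring
  have hsum : (0 : ℤ) = m - k * A.card - (k + 1) * B.card := by
    rw [← htel, Finset.sum_congr rfl hstep]
    rw [Finset.sum_sub_distrib, Finset.sum_sub_distrib]
    rw [hA, hB, ← Finset.sum_filter, ← Finset.sum_filter]
    simp only [Finset.sum_const, Finset.card_range, nsmul_eq_mul, hS]
    ring
  have key : k * A.card + (k + 1) * B.card = m := by
    have : (k : ℤ) * A.card + (k + 1) * B.card = m := by linarith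
    exact_mod_cast this
  set a := A.card with ha
  set b := B.card with hb
  set x := k * a with hx
  set y := (k + 1) * b with hy
  have hxm : x ≤ m := by omega
  have hdvd : (k + 1) ∣ x := by
    have h1 : (k + 1) ∣ m := ⟨k, by rw [hm]; ring⟩
    have h2 : (k + 1) ∣ y := ⟨b, rfl⟩
    have h3 : x = m - y := by omega
    rw [h3]; exact Nat.dvd_sub h1 h2
  have hcop : Nat.Coprime (k + 1) k := by simp
  have hdvdA : (k + 1) ∣ a := hcop.dvd_of_dvd_mul_left (by rwa [hx] at hdvd)
  have hAle : a ≤ k + 1 := by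
    have : k * a ≤ k * (k + 1) := by rw [← hx, ← hm]; exact hxm
    exact Nat.le_of_mul_le_mul_left this (by omega)
  rcases hdvdA with ⟨c, hc⟩
  have hcases : a = 0 ∨ b = 0 := by
    rcases Nat.eq_zero_or_pos c with hc0 | hc0
    · left; rw [hc, hc0, mul_zero]
    · right
      have hage : k + 1 ≤ a := by
        calc k + 1 = (k + 1) * 1 := by ring
        _ ≤ (k + 1) * c := Nat.mul_le_mul_left _ hc0
        _ = a := hc.symm
      have haeq : a = k + 1 := le_antisymm hAle hage
      have hxeq : x = m := by rw [hx, haeq, hm]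
      have : y = 0 := by omega
      rw [hy] at this
      exact (Nat.mul_eq_zero.mp this).resolve_left (by omega)
  rcases hcases with h0 | h0
  · right
    intro i hi hbad
    have : i ∈ A := by
      rw [hA, Finset.mem_filter, hS, Finset.mem_range]; exact ⟨hi, hbad⟩
    have := Finset.card_pos.mpr ⟨i, this⟩
    omega
  · left
    intro i hi hbad
    have hmem : ∀ j < m, u j = k + 1 → j ∈ B := by
      intro j hj hj2
      rw [hB, Finset.mem_filter, hS, Finset.mem_range]; exact ⟨hj, hj2⟩
    rcases Nat.lt_or_ge i m with hlt | hge
    · have := Finset.card_pos.mpr ⟨i, hmem i hlt hbad⟩; omega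
    · have hieq : i = m := by omega
      have h0mem : 0 ∈ B := by
        apply hmem 0 hmpos
        rw [hclosed, ← hieq, hbad]
      have := Finset.card_pos.mpr ⟨0, h0mem⟩; omega
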